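/- Let 0 < q₀ < 1 and let (X_1, X_2) be generated by: X_1 ~ Unif(0,1), and conditionally on X_1, X_2 = X_1 with probability 1−q₀ and X_2 ~ Unif(0,1) independently with probability q₀ (this chain is stationary with uniform marginal). For b ∈ ℕ define the pair weight w_b(a_1,a_2) = −log₂ P(⌊2^b X_1⌋ = a_1, ⌊2^b X_2⌋ = a_2), and for u ∈ [0,1)^n define c_w(u) = Σ_{i=1}^{n−1} w_b(⌊2^b u_i⌋, ⌊2^b u_{i+1}⌋). Then there exist a constant C (depending only on q₀), a real number κ_b (independent of u), and γ_b ∈ ℝ with |γ_b| ≤ C/b, such that for all b ≥ 1 and all u ∈ [0,1)^n: (1/b)·c_w(u) = (1+γ_b)·|{i ∈ {1,...,n−1} : ⌊2^b u_i⌋ ≠ ⌊2^b u_{i+1}⌋}| + κ_b. Consequently, for every λ > 0 and y ∈ ℝ^n, the minimizers over u ∈ [0,1)^n of ‖y − u‖₂² + (λ/b)·c_w(u) coincide with the minimizers of ‖y − u‖₂² + λ·(1+γ_b)·N_J(u), where N_J(u) = |{i : ⌊2^b u_i⌋ ≠ ⌊2^b u_{i+1}⌋}| counts quantized jumps. -/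

import Mathlib

open MeasureTheory

/-- The joint law of two consecutive samples of the piecewise-constant 1-Markov source:
`X₁ ~ Unif(0,1)`, and `X₂ = X₁` with probability `1-q₀`, else a fresh `Unif(0,1)` draw. -/
noncomputable def pcPairMu (q0 : ℝ) : Measure (ℝ × ℝ) :=
  ENNReal.ofReal (1 - q0) •
      (volume.restrict (Set.Ioo (0 : ℝ) 1)).map (fun x => (x, x)) +
    ENNReal.ofReal q0 •
      ((volume.restrict (Set.Ioo (0 : ℝ) 1)).prod (volume.restrict (Set.Ioo (0 : ℝ) 1)))

/-- The Q-MAP pair weight of a pair of quantization cells `(a₁, a₂)` at bitrate `b`. -/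
noncomputable def pcPairWeight (q0 : ℝ) (b : ℕ) (a1 a2 : ℤ) : ℝ :=
  - Real.logb 2
      ((pcPairMu q0 {z : ℝ × ℝ | ⌊(2 : ℝ) ^ b * z.1⌋ = a1 ∧ ⌊(2 : ℝ) ^ b * z.2⌋ = a2}).toReal)

lemma cell_eq (b : ℕ) (a : ℤ) :
    {x : ℝ | ⌊(2 : ℝ) ^ b * x⌋ = a} = Set.Ico ((a : ℝ) / 2 ^ b) (((a : ℝ) + 1) / 2 ^ b) := by
  ext x
  have hb : (0:ℝ) < 2 ^ b := by positivity
  rw [Set.mem_setOf_eq, Int.floor_eq_iff, Set.mem_Ico, div_le_iff₀ hb, lt_div_iff₀ hb]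
  constructor
  · rintro ⟨h1, h2⟩; exact ⟨by linarith, by linarith [h2]⟩
  · rintro ⟨h1, h2⟩; exact ⟨by linarith, by linarith⟩

lemma restrict_Ico_vol (l r : ℝ) (h0 : 0 ≤ l) (h1 : r ≤ 1) :
    (volume.restrict (Set.Ioo (0:ℝ) 1)) (Set.Ico l r) = ENNReal.ofReal (r - l) := by
  rw [Measure.restrict_apply measurableSet_Ico]
  apply le_antisymm
  · calc volume (Set.Ico l r ∩ Set.Ioo 0 1) ≤ volume (Set.Ico l r) :=
          measure_mono Set.inter_subset_left
      _ = ENNReal.ofReal (r - l) := Real.volume_Ico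
  · calc ENNReal.ofReal (r - l) = volume (Set.Ioo l r) := Real.volume_Ioo.symm
      _ ≤ volume (Set.Ico l r ∩ Set.Ioo 0 1) := by
          apply measure_mono
          intro x hx
          exact ⟨⟨le_of_lt hx.1, hx.2⟩, lt_of_le_of_lt h0 hx.1, lt_of_lt_of_le hx.2 h1⟩

lemma cell_vol (b : ℕ) (a : ℤ) (ha : 0 ≤ a) (ha' : a < 2 ^ b) :
    (volume.restrict (Set.Ioo (0:ℝ) 1)) {x : ℝ | ⌊(2 : ℝ) ^ b * x⌋ = a} =
      ENNReal.ofReal ((2 ^ b : ℝ)⁻¹) := by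
  have hb : (0:ℝ) < 2 ^ b := by positivity
  rw [cell_eq]
  have h1 : (0:ℝ) ≤ (a : ℝ) / 2 ^ b := by positivity
  have h2 : ((a : ℝ) + 1) / 2 ^ b ≤ 1 := by
    rw [div_le_one hb]
    have : (a : ℝ) + 1 ≤ ((2 ^ b : ℤ) : ℝ) := by exact_mod_cast Int.add_one_le_of_lt ha'
    have h2b : ((2 ^ b : ℤ) : ℝ) = (2:ℝ) ^ b := by push_cast; ring
    linarith [h2b ▸ this]
  rw [restrict_Ico_vol _ _ h1 h2]
  congr 1
  field_simp
  ring

lemma pcPairMu_cell (q0 : ℝ) (h0 : 0 ≤ q0) (h1 : q0 ≤ 1) (b : ℕ) (a1 a2 : ℤ)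
    (ha1 : 0 ≤ a1) (ha1' : a1 < 2 ^ b) (ha2 : 0 ≤ a2) (ha2' : a2 < 2 ^ b) :
    (pcPairMu q0 {z : ℝ × ℝ | ⌊(2 : ℝ) ^ b * z.1⌋ = a1 ∧ ⌊(2 : ℝ) ^ b * z.2⌋ = a2}).toReal =
      (if a1 = a2 then 1 - q0 else 0) * (2 ^ b : ℝ)⁻¹ +
        q0 * ((2 ^ b : ℝ)⁻¹ * (2 ^ b : ℝ)⁻¹) := by
  set A := {x : ℝ | ⌊(2 : ℝ) ^ b * x⌋ = a1} with hA
  set B := {x : ℝ | ⌊(2 : ℝ) ^ b * x⌋ = a2} with hB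
  have hS : {z : ℝ × ℝ | ⌊(2 : ℝ) ^ b * z.1⌋ = a1 ∧ ⌊(2 : ℝ) ^ b * z.2⌋ = a2} = A ×ˢ B := by
    ext z; simp [hA, hB, Set.mem_prod]
  have hAm : MeasurableSet A := by rw [hA, cell_eq]; exact measurableSet_Ico
  have hBm : MeasurableSet B := by rw [hB, cell_eq]; exact measurableSet_Ico
  have hSm : MeasurableSet (A ×ˢ B) := hAm.prod hBm
  have hdiag : Measurable (fun x : ℝ => (x, x)) := measurable_id.prodMk measurable_id
  have hpre : (fun x : ℝ => (x, x)) ⁻¹' (A ×ˢ B) =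
      if a1 = a2 then A else (∅ : Set ℝ) := by
    ext x
    by_cases h : a1 = a2 <;> simp [hA, hB, Set.mem_prod, h]
    intro hx; omega
  rw [hS, pcPairMu, Measure.add_apply, Measure.smul_apply, Measure.smul_apply,
    Measure.map_apply hdiag hSm, hpre, Measure.prod_prod, cell_vol b a1 ha1 ha1',
    cell_vol b a2 ha2 ha2', smul_eq_mul, smul_eq_mul]
  have hn : 0 ≤ (2 ^ b : ℝ)⁻¹ := by positivity
  by_cases h : a1 = a2
  · simp only [h, ite_true, if_pos, eq_self_iff_true]
    rw [hA, h, cell_vol b a2 ha2 ha2',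
      ← ENNReal.ofReal_mul (by linarith : (0:ℝ) ≤ 1 - q0),
      ← ENNReal.ofReal_mul hn, ← ENNReal.ofReal_mul h0,
      ← ENNReal.ofReal_add (mul_nonneg (by linarith) hn) (mul_nonneg h0 (by positivity)),
      ENNReal.toReal_ofReal (add_nonneg (mul_nonneg (by linarith) hn)
        (mul_nonneg h0 (by positivity)))]
  · simp only [h, ite_false]
    rw [measure_empty, mul_zero, zero_add,
      ← ENNReal.ofReal_mul hn, ← ENNReal.ofReal_mul h0,
      ENNReal.toReal_ofReal (mul_nonneg h0 (by positivity)), zero_mul, zero_add]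

lemma pcPairWeight_eq (q0 : ℝ) (hq0 : 0 < q0) (hq1 : q0 < 1) (b : ℕ) (a1 a2 : ℤ)
    (ha1 : 0 ≤ a1) (ha1' : a1 < 2 ^ b) (ha2 : 0 ≤ a2) (ha2' : a2 < 2 ^ b) :
    pcPairWeight q0 b a1 a2 =
      if a1 = a2 then (b : ℝ) - Real.logb 2 (1 - q0 + q0 * ((2:ℝ) ^ b)⁻¹)
      else 2 * b - Real.logb 2 q0 := by
  have he : (0:ℝ) < ((2:ℝ) ^ b)⁻¹ := by positivity
  set e := ((2:ℝ) ^ b)⁻¹ with hedef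
  have hloge : Real.logb 2 e = -b := by
    rw [hedef, Real.logb_inv, Real.logb_pow]; simp
  rw [pcPairWeight, pcPairMu_cell q0 hq0.le hq1.le b a1 a2 ha1 ha1' ha2 ha2']
  by_cases h : a1 = a2
  · simp only [h, ite_true]
    have ht : 0 < 1 - q0 + q0 * e := by nlinarith
    rw [show (1 - q0) * e + q0 * (e * e) = e * (1 - q0 + q0 * e) by ring,
      Real.logb_mul (ne_of_gt he) (ne_of_gt ht), hloge]
    ring
  · simp only [h, ite_false, zero_mul, zero_add]
    rw [Real.logb_mul (ne_of_gt hq0) (by positivity),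
      Real.logb_mul (ne_of_gt he) (ne_of_gt he), hloge]
    ring

lemma floor_range (b : ℕ) (x : ℝ) (hx : x ∈ Set.Ico (0:ℝ) 1) :
    0 ≤ ⌊(2 : ℝ) ^ b * x⌋ ∧ ⌊(2 : ℝ) ^ b * x⌋ < 2 ^ b := by
  have hb : (0:ℝ) < 2 ^ b := by positivity
  constructor
  · exact Int.floor_nonneg.mpr (by nlinarith [hx.1])
  · rw [Int.floor_lt]
    push_cast
    nlinarith [hx.2]

/-- Piecewise-constant 1-Markov example for the Q-MAP denoiser: up to an additive constant
`κ` and a multiplicative factor `1 + γ_b` with `|γ_b| ≤ C/b`, the normalized Q-MAP cost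
`(1/b)·c_w(u)` counts the quantized jumps of `u`; consequently the Q-MAP minimizers
coincide with the jump-penalized least-squares minimizers. -/
theorem stmt_14 (q0 : ℝ) (hq0 : 0 < q0) (hq1 : q0 < 1) :
    ∃ C : ℝ, ∃ γ : ℕ → ℝ, ∃ κ : ℕ → ℕ → ℝ,
      ∀ b : ℕ, 1 ≤ b →
        |γ b| ≤ C / b ∧
        ∀ n : ℕ, ∀ u : ℕ → ℝ, (∀ i ∈ Finset.Icc 1 n, u i ∈ Set.Ico (0 : ℝ) 1) →
          (1 / b : ℝ) *
              (∑ i ∈ Finset.Icc 1 (n - 1),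
                pcPairWeight q0 b ⌊(2 : ℝ) ^ b * u i⌋ ⌊(2 : ℝ) ^ b * u (i + 1)⌋) =
            (1 + γ b) *
              ((Finset.Icc 1 (n - 1)).filter
                (fun i => ⌊(2 : ℝ) ^ b * u i⌋ ≠ ⌊(2 : ℝ) ^ b * u (i + 1)⌋)).card + κ n b ∧
          (∀ lam : ℝ, 0 < lam → ∀ y : ℕ → ℝ,
            ((∀ w : ℕ → ℝ, (∀ i ∈ Finset.Icc 1 n, w i ∈ Set.Ico (0 : ℝ) 1) →
                (∑ i ∈ Finset.Icc 1 n, (y i - u i) ^ 2) +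
                  (lam / b) * ∑ i ∈ Finset.Icc 1 (n - 1),
                    pcPairWeight q0 b ⌊(2 : ℝ) ^ b * u i⌋ ⌊(2 : ℝ) ^ b * u (i + 1)⌋ ≤
                (∑ i ∈ Finset.Icc 1 n, (y i - w i) ^ 2) +
                  (lam / b) * ∑ i ∈ Finset.Icc 1 (n - 1),
                    pcPairWeight q0 b ⌊(2 : ℝ) ^ b * w i⌋ ⌊(2 : ℝ) ^ b * w (i + 1)⌋)
              ↔
             (∀ w : ℕ → ℝ, (∀ i ∈ Finset.Icc 1 n, w i ∈ Set.Ico (0 : ℝ) 1) →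
                (∑ i ∈ Finset.Icc 1 n, (y i - u i) ^ 2) +
                  lam * (1 + γ b) *
                    ((Finset.Icc 1 (n - 1)).filter
                      (fun i => ⌊(2 : ℝ) ^ b * u i⌋ ≠ ⌊(2 : ℝ) ^ b * u (i + 1)⌋)).card ≤
                (∑ i ∈ Finset.Icc 1 n, (y i - w i) ^ 2) +
                  lam * (1 + γ b) *
                    ((Finset.Icc 1 (n - 1)).filter
                      (fun i => ⌊(2 : ℝ) ^ b * w i⌋ ≠ ⌊(2 : ℝ) ^ b * w (i + 1)⌋)).card))) := by
  set t : ℕ → ℝ := fun b => 1 - q0 + q0 * ((2:ℝ) ^ b)⁻¹ with htdef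
  refine ⟨- Real.logb 2 q0 - Real.logb 2 (1 - q0),
    fun b => (- Real.logb 2 q0 + Real.logb 2 (t b)) / b,
    fun n b => ((n - 1 : ℕ) : ℝ) * (((b : ℝ) - Real.logb 2 (t b)) / b), ?_⟩
  intro b hb
  have hbR : (0:ℝ) < b := by exact_mod_cast hb
  have he : (0:ℝ) < ((2:ℝ) ^ b)⁻¹ := by positivity
  have he1 : ((2:ℝ) ^ b)⁻¹ ≤ 1 := by
    rw [inv_le_one_iff₀]; right; exact one_le_pow₀ (by norm_num)
  have ht0 : 0 < t b := by simp only [htdef]; nlinarith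
  have ht1 : t b ≤ 1 := by simp only [htdef]; nlinarith
  have hlq : Real.logb 2 q0 ≤ 0 := Real.logb_nonpos (by norm_num) hq0.le hq1.le
  have hlt0 : Real.logb 2 (t b) ≤ 0 := Real.logb_nonpos (by norm_num) ht0.le ht1
  have hlt1 : Real.logb 2 (1 - q0) ≤ Real.logb 2 (t b) := by
    apply Real.logb_le_logb_of_le (by norm_num) (by linarith)
    simp only [htdef]; nlinarith
  have hl1q : Real.logb 2 (1 - q0) ≤ 0 :=
    Real.logb_nonpos (by norm_num) (by linarith) (by linarith)
  constructor
  · rw [abs_div, abs_of_pos hbR]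
    gcongr
    rw [abs_le]
    constructor <;> linarith
  -- main identity
  intro n u hu
  have key : ∀ v : ℕ → ℝ, (∀ i ∈ Finset.Icc 1 n, v i ∈ Set.Ico (0 : ℝ) 1) →
      (1 / b : ℝ) *
          (∑ i ∈ Finset.Icc 1 (n - 1),
            pcPairWeight q0 b ⌊(2 : ℝ) ^ b * v i⌋ ⌊(2 : ℝ) ^ b * v (i + 1)⌋) =
        (1 + (- Real.logb 2 q0 + Real.logb 2 (t b)) / b) *
          ((Finset.Icc 1 (n - 1)).filter
            (fun i => ⌊(2 : ℝ) ^ b * v i⌋ ≠ ⌊(2 : ℝ) ^ b * v (i + 1)⌋)).card +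
        ((n - 1 : ℕ) : ℝ) * (((b : ℝ) - Real.logb 2 (t b)) / b) := by
    intro v hv
    have hsum : ∑ i ∈ Finset.Icc 1 (n - 1),
        pcPairWeight q0 b ⌊(2 : ℝ) ^ b * v i⌋ ⌊(2 : ℝ) ^ b * v (i + 1)⌋ =
        ∑ i ∈ Finset.Icc 1 (n - 1),
          (if ⌊(2 : ℝ) ^ b * v i⌋ ≠ ⌊(2 : ℝ) ^ b * v (i + 1)⌋
            then 2 * (b : ℝ) - Real.logb 2 q0
            else (b : ℝ) - Real.logb 2 (t b)) := by
      apply Finset.sum_congr rfl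
      intro i hi
      rw [Finset.mem_Icc] at hi
      have hi1 : i ∈ Finset.Icc 1 n := by rw [Finset.mem_Icc]; omega
      have hi2 : i + 1 ∈ Finset.Icc 1 n := by rw [Finset.mem_Icc]; omega
      obtain ⟨r1, r1'⟩ := floor_range b (v i) (hv i hi1)
      obtain ⟨r2, r2'⟩ := floor_range b (v (i+1)) (hv (i+1) hi2)
      rw [pcPairWeight_eq q0 hq0 hq1 b _ _ r1 r1' r2 r2']
      by_cases h : ⌊(2 : ℝ) ^ b * v i⌋ = ⌊(2 : ℝ) ^ b * v (i + 1)⌋ <;> simp [h, htdef]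
    rw [hsum, Finset.sum_ite, Finset.sum_const, Finset.sum_const, nsmul_eq_mul, nsmul_eq_mul]
    have hcards : ((Finset.Icc 1 (n - 1)).filter
          (fun i => ⌊(2 : ℝ) ^ b * v i⌋ ≠ ⌊(2 : ℝ) ^ b * v (i + 1)⌋)).card +
        ((Finset.Icc 1 (n - 1)).filter
          (fun i => ¬ ⌊(2 : ℝ) ^ b * v i⌋ ≠ ⌊(2 : ℝ) ^ b * v (i + 1)⌋)).card
        = n - 1 := by
      rw [Finset.card_filter_add_card_filter_not, Nat.card_Icc]; omega
    set J := ((Finset.Icc 1 (n - 1)).filter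
      (fun i => ⌊(2 : ℝ) ^ b * v i⌋ ≠ ⌊(2 : ℝ) ^ b * v (i + 1)⌋)).card
    set Jc := ((Finset.Icc 1 (n - 1)).filter
      (fun i => ¬ ⌊(2 : ℝ) ^ b * v i⌋ ≠ ⌊(2 : ℝ) ^ b * v (i + 1)⌋)).card
    have hcR : (Jc : ℝ) = ((n - 1 : ℕ) : ℝ) - (J : ℝ) := by
      have := hcards
      have : (J : ℝ) + (Jc : ℝ) = ((n - 1 : ℕ) : ℝ) := by exact_mod_cast congrArg Nat.cast this
      linarith
    rw [hcR]
    field_simp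
    ring
  constructor
  · exact key u hu
  · intro lam hlam y
    constructor
    · intro H w hw
      have h1 := key u hu
      have h2 := key w hw
      have H' := H w hw
      have e1 : (lam / b) * (∑ i ∈ Finset.Icc 1 (n - 1),
          pcPairWeight q0 b ⌊(2 : ℝ) ^ b * u i⌋ ⌊(2 : ℝ) ^ b * u (i + 1)⌋) =
          lam * ((1 / b : ℝ) * (∑ i ∈ Finset.Icc 1 (n - 1),
            pcPairWeight q0 b ⌊(2 : ℝ) ^ b * u i⌋ ⌊(2 : ℝ) ^ b * u (i + 1)⌋)) := by ring
      have e2 : (lam / b) * (∑ i ∈ Finset.Icc 1 (n - 1),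
          pcPairWeight q0 b ⌊(2 : ℝ) ^ b * w i⌋ ⌊(2 : ℝ) ^ b * w (i + 1)⌋) =
          lam * ((1 / b : ℝ) * (∑ i ∈ Finset.Icc 1 (n - 1),
            pcPairWeight q0 b ⌊(2 : ℝ) ^ b * w i⌋ ⌊(2 : ℝ) ^ b * w (i + 1)⌋)) := by ring
      rw [e1, h1, e2, h2] at H'
      nlinarith [H']
    · intro H w hw
      have h1 := key u hu
      have h2 := key w hw
      have H' := H w hw
      have e1 : (lam / b) * (∑ i ∈ Finset.Icc 1 (n - 1),
          pcPairWeight q0 b ⌊(2 : ℝ) ^ b * u i⌋ ⌊(2 : ℝ) ^ b * u (i + 1)⌋) =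
          lam * ((1 / b : ℝ) * (∑ i ∈ Finset.Icc 1 (n - 1),
            pcPairWeight q0 b ⌊(2 : ℝ) ^ b * u i⌋ ⌊(2 : ℝ) ^ b * u (i + 1)⌋)) := by ring
      have e2 : (lam / b) * (∑ i ∈ Finset.Icc 1 (n - 1),
          pcPairWeight q0 b ⌊(2 : ℝ) ^ b * w i⌋ ⌊(2 : ℝ) ^ b * w (i + 1)⌋) =
          lam * ((1 / b : ℝ) * (∑ i ∈ Finset.Icc 1 (n - 1),
            pcPairWeight q0 b ⌊(2 : ℝ) ^ b * w i⌋ ⌊(2 : ℝ) ^ b * w (i + 1)⌋)) := by ring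
      rw [e1, h1, e2, h2]
      nlinarith [H']
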